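/- Let Φ = {φ_f : f ∈ ω^κ} be a coherent family with κ of countable cofinality witnessed by an increasing sequence β_0 = 0 < β_1 < …, and suppose for each j a function φ_j : [β_j, β_{j+1}) × ω → ℤ trivializes Φ restricted to [β_j, β_{j+1}). Let φ be their amalgamation. Then for every f ∈ ω^κ, the set e(φ_f, φ) = {α : φ_f(α,i) ≠ φ(α,i) for some i with (α,i) ∈ I_f} is countable. -/
import Mathlib


/-- `I_f = {(α,i) : i ≤ f(α)}` for `f ∈ ω^κ`. -/
def IK {K : Type} (f : K → ℕ) : Set (K × ℕ) := {x | x.2 ≤ f x.1}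

/-- Let `κ` have countable cofinality, witnessed by `β_0 = 0 < β_1 < …` cofinal,
let `Φ` be coherent, let each `φ_j` trivialize `Φ ↾ [β_j, β_{j+1})`, and let `φ`
be their amalgamation. Then for every `f`, the set
`e(φ_f, φ) = {α : φ_f(α,i) ≠ φ(α,i) for some i with (α,i) ∈ I_f}` is countable. -/
theorem amalgamation_error_countable
    (K : Type) [LinearOrder K]
    (β : ℕ → K) (hβ0 : ∀ α : K, β 0 ≤ α) (hmono : StrictMono β)
    (hcofinal : ∀ α : K, ∃ j : ℕ, α < β j)
    (Φ : (K → ℕ) → K × ℕ → ℤ)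
    (hcoh : ∀ f g : K → ℕ, {x | x ∈ IK f ∩ IK g ∧ Φ f x ≠ Φ g x}.Finite)
    (φj : ℕ → K × ℕ → ℤ)
    (htriv : ∀ (j : ℕ) (f : K → ℕ),
      {x | x ∈ IK f ∧ x.1 ∈ Set.Ico (β j) (β (j + 1)) ∧ Φ f x ≠ φj j x}.Finite)
    (φ : K × ℕ → ℤ)
    (hφ : ∀ (j : ℕ) (x : K × ℕ), x.1 ∈ Set.Ico (β j) (β (j + 1)) → φ x = φj j x) :
    ∀ f : K → ℕ, {α : K | ∃ i : ℕ, (α, i) ∈ IK f ∧ Φ f (α, i) ≠ φ (α, i)}.Countable := by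
  intro f
  have hsub : {α : K | ∃ i : ℕ, (α, i) ∈ IK f ∧ Φ f (α, i) ≠ φ (α, i)} ⊆
      ⋃ j : ℕ, Prod.fst '' {x | x ∈ IK f ∧ x.1 ∈ Set.Ico (β j) (β (j + 1)) ∧ Φ f x ≠ φj j x} := by
    rintro α ⟨i, hIf, hne⟩
    -- find j with β j ≤ α < β (j+1)
    have hex : ∃ j : ℕ, α < β (j + 1) := by
      obtain ⟨j, hj⟩ := hcofinal α
      exact ⟨j, hj.trans_le (hmono.monotone (Nat.le_succ j))⟩
    classical
    let j := Nat.find hex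
    have hlt : α < β (j + 1) := Nat.find_spec hex
    have hge : β j ≤ α := by
      rcases Nat.eq_zero_or_pos j with h0 | hpos
      · rw [h0]; exact hβ0 α
      · have hlt' : j - 1 < j := Nat.sub_lt hpos one_pos
        have := Nat.find_min hex hlt'
        rw [Nat.sub_add_cancel hpos] at this
        exact le_of_not_gt this
    have hmem : α ∈ Set.Ico (β j) (β (j + 1)) := ⟨hge, hlt⟩
    refine Set.mem_iUnion.2 ⟨j, ⟨(α, i), ⟨hIf, hmem, ?_⟩, rfl⟩⟩
    rwa [← hφ j (α, i) hmem]
  exact Set.Countable.mono hsub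
    (Set.countable_iUnion fun j => ((htriv j f).image _).countable)
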